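/- Let v : ℝ² → ℝ² be continuously differentiable with derivative Dv, let u_max > 0, let θ : ℝ → ℝ be differentiable, and let z : ℝ → ℝ² be differentiable with ż(t) = v(z(t)) + u_max·(cos θ(t), sin θ(t)) for all t. Suppose θ'(t) = −⟨(−sin θ(t), cos θ(t)), Dv(z(t))ᵀ (cos θ(t), sin θ(t))⟩ for all t. Then z is twice differentiable and satisfies z̈(t) = Dv(z(t))·ż(t) − (1/u_max²)·⟨J(ż(t) − v(z(t))), Dv(z(t))ᵀ(ż(t) − v(z(t)))⟩ · J(ż(t) − v(z(t))) for all t, where J is the rotation matrix with rows (0, −1) and (1, 0). -/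

import Mathlib

open Matrix

/-- The rotation by `π/2` matrix `J` with rows `(0, −1)` and `(1, 0)`. -/
def Jrot : Matrix (Fin 2) (Fin 2) ℝ := !![0, -1; 1, 0]

/-- For a C¹ velocity field `v` with Jacobian `Dv`, a glider path `z` with
`ż = v(z) + u_max·(cos θ, sin θ)` whose control angle satisfies
`θ' = −⟨(−sin θ, cos θ), Dv(z)ᵀ(cos θ, sin θ)⟩`, the path is twice differentiable and
satisfies the second-order equation
`z̈ = Dv(z)·ż − (1/u_max²)·⟨J(ż − v(z)), Dv(z)ᵀ(ż − v(z))⟩·J(ż − v(z))`. -/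
theorem stmt8 (v : (Fin 2 → ℝ) → (Fin 2 → ℝ)) (Dv : (Fin 2 → ℝ) → Matrix (Fin 2) (Fin 2) ℝ)
    (hv : ContDiff ℝ 1 v)
    (hDv : ∀ x, HasFDerivAt v (LinearMap.toContinuousLinearMap (Matrix.mulVecLin (Dv x))) x)
    (umax : ℝ) (humax : 0 < umax)
    (θ : ℝ → ℝ) (hθ : Differentiable ℝ θ)
    (z : ℝ → (Fin 2 → ℝ)) (hz : Differentiable ℝ z)
    (hzode : ∀ t, deriv z t = v (z t) + umax • ![Real.cos (θ t), Real.sin (θ t)])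
    (hθode : ∀ t, deriv θ t =
      -(dotProduct ![-(Real.sin (θ t)), Real.cos (θ t)]
        (Matrix.mulVec (Dv (z t))ᵀ ![Real.cos (θ t), Real.sin (θ t)]))) :
    Differentiable ℝ (deriv z) ∧
    ∀ t, deriv (deriv z) t =
      Matrix.mulVec (Dv (z t)) (deriv z t) -
        ((1 / umax ^ 2) *
          dotProduct (Matrix.mulVec Jrot (deriv z t - v (z t)))
            (Matrix.mulVec (Dv (z t))ᵀ (deriv z t - v (z t)))) •
          Matrix.mulVec Jrot (deriv z t - v (z t)) := by
  have hw : ∀ t, HasDerivAt (fun t => (![Real.cos (θ t), Real.sin (θ t)] : Fin 2 → ℝ))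
      (deriv θ t • ![-Real.sin (θ t), Real.cos (θ t)]) t := by
    intro t
    rw [hasDerivAt_pi]
    intro i
    fin_cases i
    · simpa [mul_comm, Function.comp_def] using (Real.hasDerivAt_cos (θ t)).comp t (hθ t).hasDerivAt
    · simpa [mul_comm, Function.comp_def] using (Real.hasDerivAt_sin (θ t)).comp t (hθ t).hasDerivAt
  have hz' : ∀ t, HasDerivAt (deriv z)
      (Matrix.mulVec (Dv (z t)) (deriv z t) +
        (umax * deriv θ t) • ![-Real.sin (θ t), Real.cos (θ t)]) t := by
    intro t
    have h1 : HasDerivAt (fun t => v (z t)) (Matrix.mulVec (Dv (z t)) (deriv z t)) t := by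
      simpa [Function.comp_def] using (hDv (z t)).comp_hasDerivAt t (hz t).hasDerivAt
    have h2 := h1.add (((hw t).const_smul umax))
    have heq : deriv z = fun t => v (z t) + umax • ![Real.cos (θ t), Real.sin (θ t)] :=
      funext hzode
    rw [smul_smul] at h2
    exact h2.congr_of_eventuallyEq (Filter.Eventually.of_forall hzode)
  constructor
  · exact fun t => (hz' t).differentiableAt
  · intro t
    rw [(hz' t).deriv]
    have hdiff : deriv z t - v (z t) = umax • ![Real.cos (θ t), Real.sin (θ t)] := by
      rw [hzode t]; abel
    rw [hdiff]
    have hJ : Matrix.mulVec Jrot (umax • ![Real.cos (θ t), Real.sin (θ t)])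
        = umax • ![-Real.sin (θ t), Real.cos (θ t)] := by
      funext i
      fin_cases i <;>
        simp [Jrot, Matrix.mulVec, dotProduct, Fin.sum_univ_two, mul_comm]
    rw [hJ, Matrix.mulVec_smul, dotProduct_smul, smul_dotProduct]
    have hdot : dotProduct ![-Real.sin (θ t), Real.cos (θ t)]
        (Matrix.mulVec (Dv (z t))ᵀ ![Real.cos (θ t), Real.sin (θ t)]) = -deriv θ t := by
      rw [hθode t, neg_neg]
    rw [hdot, smul_eq_mul, smul_eq_mul, smul_smul]
    have hs : 1 / umax ^ 2 * (umax * (umax * -deriv θ t)) * umax = -(umax * deriv θ t) := by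
      field_simp
    rw [hs, sub_eq_add_neg, ← neg_smul, neg_neg]
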